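/- Let n ≥ 3 and A₁, A₂, A₃ be real symmetric n×n matrices. Suppose there exists s ∈ ℝ³ such that s₁A₁ + s₂A₂ + s₃A₃ is positive definite. Then the joint numerical range {(xᵀA₁x, xᵀA₂x, xᵀA₃x) : x ∈ ℝⁿ} is a convex cone in ℝ³. -/

import Mathlib

open Matrix

section QF
variable {n : ℕ}
private def qf (A : Matrix (Fin n) (Fin n) ℝ) (x : Fin n → ℝ) : ℝ := x ⬝ᵥ A *ᵥ x
end QF

section Test
variable {n : ℕ}

private lemma continuous_qf (A : Matrix (Fin n) (Fin n) ℝ) : Continuous (qf A) := by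
  unfold qf dotProduct Matrix.mulVec
  apply continuous_finset_sum
  intro i _
  apply Continuous.mul (continuous_apply i)
  exact continuous_finset_sum _ fun j _ => (continuous_const.mul (continuous_apply j))

private def Qv (A₁ A₂ A₃ : Matrix (Fin n) (Fin n) ℝ) (x : Fin n → ℝ) : Fin 3 → ℝ :=
  ![qf A₁ x, qf A₂ x, qf A₃ x]

private def Lm (A₁ A₂ A₃ : Matrix (Fin n) (Fin n) ℝ) (l : Fin 3 → ℝ) :
    Matrix (Fin n) (Fin n) ℝ := l 0 • A₁ + l 1 • A₂ + l 2 • A₃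

private lemma qf_smul' (A : Matrix (Fin n) (Fin n) ℝ) (c : ℝ) (x : Fin n → ℝ) :
    qf A (c • x) = c ^ 2 * qf A x := by
  simp [qf, Matrix.mulVec_smul, dotProduct_smul, smul_dotProduct]
  ring

private lemma dot_Qv (A₁ A₂ A₃ : Matrix (Fin n) (Fin n) ℝ) (l : Fin 3 → ℝ) (x : Fin n → ℝ) :
    l ⬝ᵥ Qv A₁ A₂ A₃ x = qf (Lm A₁ A₂ A₃ l) x := by
  simp [Qv, qf, Lm, dotProduct, Fin.sum_univ_three, Matrix.add_mulVec,
    Matrix.smul_mulVec]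
  rw [Finset.mul_sum, Finset.mul_sum, Finset.mul_sum, ← Finset.sum_add_distrib,
    ← Finset.sum_add_distrib]
  exact Finset.sum_congr rfl fun i _ => by ring

private lemma Qv_smul (A₁ A₂ A₃ : Matrix (Fin n) (Fin n) ℝ) (c : ℝ) (x : Fin n → ℝ) :
    Qv A₁ A₂ A₃ (c • x) = c ^ 2 • Qv A₁ A₂ A₃ x := by
  funext i
  fin_cases i <;> simp [Qv, qf_smul']

end Test


section Core
variable {n : ℕ}

private def Qd (lam : Fin n → ℝ) (x : Fin n → ℝ) : ℝ := ∑ i, lam i * x i ^ 2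

private def Cs (lam : Fin n → ℝ) : Set (Fin n → ℝ) := {z | z ≠ 0 ∧ Qd lam z = 0}

private noncomputable def sgn (u : ℝ) : ℝ := if u < 0 then -1 else 1

private lemma sgn_cases (u : ℝ) : sgn u = 1 ∨ sgn u = -1 := by
  unfold sgn; split_ifs <;> simp

private lemma sgn_sq (u : ℝ) : sgn u ^ 2 = 1 := by
  rcases sgn_cases u with h | h <;> rw [h] <;> norm_num

private lemma sgn_ne_zero (u : ℝ) : sgn u ≠ 0 := by
  rcases sgn_cases u with h | h <;> rw [h] <;> norm_num

private lemma sgn_mul_sqrt_sq (u : ℝ) : sgn u * Real.sqrt (u ^ 2) = u := by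
  rw [Real.sqrt_sq_eq_abs]
  unfold sgn
  split_ifs with h
  · rw [abs_of_neg h]; ring
  · rw [abs_of_nonneg (not_lt.mp h)]; ring

private lemma Qd_smul (lam : Fin n → ℝ) (c : ℝ) (x : Fin n → ℝ) :
    Qd lam (c • x) = c ^ 2 * Qd lam x := by
  unfold Qd
  rw [Finset.mul_sum]
  refine Finset.sum_congr rfl fun i _ => ?_
  simp [Pi.smul_apply, smul_eq_mul]; ring

private lemma Qd_neg (lam : Fin n → ℝ) (x : Fin n → ℝ) : Qd lam (-x) = Qd lam x := by
  have : -x = (-1 : ℝ) • x := by funext i; simp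
  rw [this, Qd_smul]; ring

private lemma sumIf2 {i0 j0 : Fin n} (hij : i0 ≠ j0) (A B : ℝ) :
    (∑ k, (if k = i0 then A else if k = j0 then B else 0)) = A + B := by
  have : ∀ k : Fin n, (if k = i0 then A else if k = j0 then B else 0)
      = (if k = i0 then A else 0) + (if k = j0 then B else 0) := by
    intro k
    split_ifs with h1 h2 <;> simp_all
  simp_rw [this]
  rw [Finset.sum_add_distrib]
  simp [Finset.sum_ite_eq']

private lemma sumIf3 {i0 j0 k2 : Fin n} (hij : i0 ≠ j0) (hik : i0 ≠ k2) (hjk : j0 ≠ k2)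
    (A B C : ℝ) :
    (∑ k, (if k = i0 then A else if k = j0 then B else if k = k2 then C else 0)) = A + B + C := by
  have : ∀ k : Fin n, (if k = i0 then A else if k = j0 then B else if k = k2 then C else 0)
      = (if k = i0 then A else 0) + (if k = j0 then B else 0) + (if k = k2 then C else 0) := by
    intro k
    split_ifs with h1 h2 h3 <;> simp_all
  simp_rw [this]
  rw [Finset.sum_add_distrib, Finset.sum_add_distrib]
  simp [Finset.sum_ite_eq']

/-- scaling along a ray stays in the cone -/
private lemma joined_scale (lam : Fin n → ℝ) (x : Fin n → ℝ) (hx : x ∈ Cs lam)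
    (κ : ℝ) (hκ : 0 < κ) : JoinedIn (Cs lam) x (κ • x) := by
  apply JoinedIn.ofLine (f := fun t => (1 + t * (κ - 1)) • x)
  · fun_prop
  · norm_num
  · norm_num
  · rintro z ⟨t, ht, rfl⟩
    have hc : 0 < 1 + t * (κ - 1) := by
      rcases le_or_gt κ 1 with h | h
      · nlinarith [ht.1, ht.2]
      · nlinarith [ht.1, ht.2]
    constructor
    · exact smul_ne_zero (ne_of_gt hc) hx.1
    · rw [Qd_smul, hx.2]; ring

section MainPath
variable {lam : Fin n → ℝ} {i0 j0 : Fin n}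

/-- canonical point -/
private def vv (i0 j0 : Fin n) (a b σ τ : ℝ) : Fin n → ℝ :=
  fun k => if k = i0 then σ * a else if k = j0 then τ * b else 0

private lemma joined_to_canonical (hij : i0 ≠ j0) (hpos : 0 < lam i0) (hneg : lam j0 < 0)
    (x : Fin n → ℝ) (hx : x ∈ Cs lam) :
    JoinedIn (Cs lam) x
      (vv i0 j0 (Real.sqrt (-lam j0)) (Real.sqrt (lam i0)) (sgn (x i0)) (sgn (x j0))) := by
  set a := Real.sqrt (-lam j0) with ha
  set b := Real.sqrt (lam i0) with hb
  have ha2 : a ^ 2 = -lam j0 := Real.sq_sqrt (by linarith)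
  have hb2 : b ^ 2 = lam i0 := Real.sq_sqrt (by linarith)
  have ha0 : 0 < a := Real.sqrt_pos.mpr (by linarith)
  have hb0 : 0 < b := Real.sqrt_pos.mpr (by linarith)
  apply JoinedIn.ofLine
    (f := fun t k => if k = i0 then sgn (x i0) * Real.sqrt ((1-t)^2 * (x i0)^2 + t * a^2)
      else if k = j0 then sgn (x j0) * Real.sqrt ((1-t)^2 * (x j0)^2 + t * b^2)
      else (1-t) * x k)
  · apply Continuous.continuousOn
    apply continuous_pi
    intro k
    split_ifs <;> fun_prop
  · funext k
    split_ifs with h1 h2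
    · subst h1
      have h : (1-(0:ℝ))^2 * (x k)^2 + 0 * a^2 = (x k)^2 := by ring
      rw [h, sgn_mul_sqrt_sq]
    · subst h2
      have h : (1-(0:ℝ))^2 * (x k)^2 + 0 * b^2 = (x k)^2 := by ring
      rw [h, sgn_mul_sqrt_sq]
    · simp
  · funext k
    unfold vv
    split_ifs with h1 h2
    · subst h1
      have : (1-(1:ℝ))^2 * (x k)^2 + 1 * a^2 = a ^ 2 := by ring
      rw [this, Real.sqrt_sq ha0.le]
    · subst h2
      have : (1-(1:ℝ))^2 * (x k)^2 + 1 * b^2 = b ^ 2 := by ring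
      rw [this, Real.sqrt_sq hb0.le]
    · ring
  · rintro z ⟨t, ht, rfl⟩
    simp only [Set.mem_Icc] at ht
    beta_reduce
    have hti : 0 ≤ t := ht.1
    have key : ∀ k, lam k * (if k = i0 then sgn (x i0) * Real.sqrt ((1-t)^2 * (x i0)^2 + t * a^2)
        else if k = j0 then sgn (x j0) * Real.sqrt ((1-t)^2 * (x j0)^2 + t * b^2)
        else (1-t) * x k) ^ 2
        = (1-t)^2 * (lam k * x k ^ 2)
          + (if k = i0 then t * (lam i0 * a^2) else if k = j0 then t * (lam j0 * b^2) else 0) := by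
    -- pointwise identity
      intro k
      split_ifs with h1 h2
      · subst h1
        rw [mul_pow, sgn_sq, one_mul, Real.sq_sqrt (by positivity)]
        ring
      · subst h2
        rw [mul_pow, sgn_sq, one_mul, Real.sq_sqrt (by positivity)]
        ring
      · ring
    constructor
    · -- nonzero
      rcases eq_or_lt_of_le hti with h0 | h0
      · -- t = 0 : the point is x
        have : (fun k => if k = i0 then sgn (x i0) * Real.sqrt ((1-t)^2 * (x i0)^2 + t * a^2)
            else if k = j0 then sgn (x j0) * Real.sqrt ((1-t)^2 * (x j0)^2 + t * b^2)
            else (1-t) * x k) = x := by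
          funext k
          rw [← h0]
          split_ifs with h1 h2
          · subst h1
            have h : (1-(0:ℝ))^2 * (x k)^2 + 0 * a^2 = (x k)^2 := by ring
            rw [h, sgn_mul_sqrt_sq]
          · subst h2
            have h : (1-(0:ℝ))^2 * (x k)^2 + 0 * b^2 = (x k)^2 := by ring
            rw [h, sgn_mul_sqrt_sq]
          · simp
        rw [this]; exact hx.1
      · -- t > 0 : coordinate i0 nonzero
        intro hzero
        have := congrFun hzero i0
        simp only [if_pos rfl, Pi.zero_apply] at this
        have hsq : 0 < Real.sqrt ((1-t)^2 * (x i0)^2 + t * a^2) := by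
          apply Real.sqrt_pos.mpr
          nlinarith [sq_nonneg ((1-t) * x i0), sq_nonneg a]
        exact (mul_ne_zero (sgn_ne_zero _) (ne_of_gt hsq)) this
    · -- Qd = 0
      unfold Qd
      rw [Finset.sum_congr rfl (fun k _ => key k), Finset.sum_add_distrib]
      rw [← Finset.mul_sum, sumIf2 hij]
      have hQx : ∑ i, lam i * x i ^ 2 = 0 := hx.2
      rw [hQx]
      have : lam i0 * a^2 = -(lam j0 * b^2) := by rw [ha2, hb2]; ring
      rw [this]; ring

end MainPath

section Bridges
variable {lam : Fin n → ℝ} {i0 j0 k2 : Fin n}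

private lemma bridge_zero (hij : i0 ≠ j0) (hik : i0 ≠ k2) (hjk : j0 ≠ k2)
    (hpos : 0 < lam i0) (hneg : lam j0 < 0) (hmu : lam k2 = 0) (σ τ : ℝ)
    (hσ : σ ^ 2 = 1) (hτ : τ ^ 2 = 1) :
    JoinedIn (Cs lam) (vv i0 j0 (Real.sqrt (-lam j0)) (Real.sqrt (lam i0)) σ τ)
      (fun k => if k = k2 then 1 else 0) := by
  set a := Real.sqrt (-lam j0) with ha
  set b := Real.sqrt (lam i0) with hb
  have ha2 : a ^ 2 = -lam j0 := Real.sq_sqrt (by linarith)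
  have hb2 : b ^ 2 = lam i0 := Real.sq_sqrt (by linarith)
  have ha0 : 0 < a := Real.sqrt_pos.mpr (by linarith)
  have hσ0 : σ ≠ 0 := by intro h; rw [h] at hσ; norm_num at hσ
  apply JoinedIn.ofLine
    (f := fun t k => if k = i0 then (1-t) * (σ * a)
      else if k = j0 then (1-t) * (τ * b) else if k = k2 then t else 0)
  · apply Continuous.continuousOn
    apply continuous_pi
    intro k
    split_ifs <;> fun_prop
  · funext k; unfold vv; split_ifs <;> subst_vars <;> simp_all
  · funext k; split_ifs <;> subst_vars <;> simp_all
  · rintro z ⟨t, ht, rfl⟩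
    simp only [Set.mem_Icc] at ht
    beta_reduce
    constructor
    · rcases lt_or_eq_of_le ht.2 with h1 | h1
      · intro hzero
        have := congrFun hzero i0
        simp only [if_pos rfl, Pi.zero_apply] at this
        have : (1 - t) * (σ * a) ≠ 0 := by
          apply mul_ne_zero (by linarith) (mul_ne_zero hσ0 (ne_of_gt ha0))
        simp_all
      · intro hzero
        have := congrFun hzero k2
        rw [if_neg (Ne.symm hik), if_neg (Ne.symm hjk), if_pos rfl] at this
        simp [h1] at this
    · unfold Qd
      have key : ∀ k, lam k * (if k = i0 then (1-t) * (σ * a)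
          else if k = j0 then (1-t) * (τ * b) else if k = k2 then t else 0) ^ 2
          = (if k = i0 then (1-t)^2 * (lam i0 * a^2) else if k = j0 then (1-t)^2 * (lam j0 * b^2)
            else if k = k2 then 0 else 0) := by
        intro k
        split_ifs with h1 h2 h3
        · subst h1; rw [mul_pow, mul_pow, hσ]; ring
        · subst h2; rw [mul_pow, mul_pow, hτ]; ring
        · subst h3; rw [hmu]; ring
        · ring
      rw [Finset.sum_congr rfl (fun k _ => key k), sumIf3 hij hik hjk]
      rw [ha2, hb2]; ring

private lemma bridge_pos (hij : i0 ≠ j0) (hik : i0 ≠ k2) (hjk : j0 ≠ k2)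
    (hpos : 0 < lam i0) (hneg : lam j0 < 0) (hmu : 0 < lam k2) (σ τ : ℝ)
    (hσ : σ ^ 2 = 1) (hτ : τ ^ 2 = 1) :
    JoinedIn (Cs lam) (vv i0 j0 (Real.sqrt (-lam j0)) (Real.sqrt (lam i0)) σ τ)
      (fun k => if k = j0 then τ * Real.sqrt (lam i0)
        else if k = k2 then Real.sqrt (-lam j0 * (Real.sqrt (lam i0))^2 / lam k2) else 0) := by
  set a := Real.sqrt (-lam j0) with ha
  set b := Real.sqrt (lam i0) with hb
  set α := Real.sqrt (-lam j0 * b^2 / lam k2) with hα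
  have ha2 : a ^ 2 = -lam j0 := Real.sq_sqrt (by linarith)
  have hb2 : b ^ 2 = lam i0 := Real.sq_sqrt (by linarith)
  have ha0 : 0 < a := Real.sqrt_pos.mpr (by linarith)
  have hb0 : 0 < b := Real.sqrt_pos.mpr (by linarith)
  have hα2 : α ^ 2 = -lam j0 * b^2 / lam k2 := by
    apply Real.sq_sqrt
    apply div_nonneg _ hmu.le
    nlinarith
  have hτ0 : τ ≠ 0 := by intro h; rw [h] at hτ; norm_num at hτ
  apply JoinedIn.ofLine
    (f := fun t k => if k = i0 then σ * Real.sqrt (1-t) * a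
      else if k = j0 then τ * b else if k = k2 then Real.sqrt t * α else 0)
  · apply Continuous.continuousOn
    apply continuous_pi
    intro k
    split_ifs <;> fun_prop
  · funext k; unfold vv
    split_ifs <;> subst_vars <;> simp_all [Real.sqrt_one, Real.sqrt_zero]
  · funext k
    split_ifs <;> subst_vars <;> simp_all [Real.sqrt_one, Real.sqrt_zero]
  · rintro z ⟨t, ht, rfl⟩
    simp only [Set.mem_Icc] at ht
    beta_reduce
    constructor
    · intro hzero
      have := congrFun hzero j0
      rw [if_neg (Ne.symm hij), if_pos rfl] at this
      exact (mul_ne_zero hτ0 (ne_of_gt hb0)) (by simpa using this)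
    · unfold Qd
      have key : ∀ k, lam k * (if k = i0 then σ * Real.sqrt (1-t) * a
          else if k = j0 then τ * b else if k = k2 then Real.sqrt t * α else 0) ^ 2
          = (if k = i0 then (1-t) * (lam i0 * a^2) else if k = j0 then lam j0 * b^2
            else if k = k2 then t * (-lam j0 * b^2) else 0) := by
        intro k
        split_ifs with h1 h2 h3
        · subst h1
          rw [mul_pow, mul_pow, hσ, Real.sq_sqrt (by linarith : (0:ℝ) ≤ 1 - t)]
          ring
        · subst h2; rw [mul_pow, hτ]; ring
        · subst h3
          rw [mul_pow, Real.sq_sqrt ht.1, hα2]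
          field_simp
        · ring
      rw [Finset.sum_congr rfl (fun k _ => key k), sumIf3 hij hik hjk]
      rw [ha2, hb2]; ring

private lemma bridge_neg (hij : i0 ≠ j0) (hik : i0 ≠ k2) (hjk : j0 ≠ k2)
    (hpos : 0 < lam i0) (hneg : lam j0 < 0) (hmu : lam k2 < 0) (σ τ : ℝ)
    (hσ : σ ^ 2 = 1) (hτ : τ ^ 2 = 1) :
    JoinedIn (Cs lam) (vv i0 j0 (Real.sqrt (-lam j0)) (Real.sqrt (lam i0)) σ τ)
      (fun k => if k = i0 then σ * Real.sqrt (-lam j0)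
        else if k = k2 then Real.sqrt (lam i0 * (Real.sqrt (-lam j0))^2 / (-lam k2)) else 0) := by
  set a := Real.sqrt (-lam j0) with ha
  set b := Real.sqrt (lam i0) with hb
  set β := Real.sqrt (lam i0 * a^2 / (-lam k2)) with hβ
  have ha2 : a ^ 2 = -lam j0 := Real.sq_sqrt (by linarith)
  have hb2 : b ^ 2 = lam i0 := Real.sq_sqrt (by linarith)
  have ha0 : 0 < a := Real.sqrt_pos.mpr (by linarith)
  have hβ2 : β ^ 2 = lam i0 * a^2 / (-lam k2) := by
    apply Real.sq_sqrt
    apply div_nonneg _ (by linarith)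
    nlinarith
  have hσ0 : σ ≠ 0 := by intro h; rw [h] at hσ; norm_num at hσ
  apply JoinedIn.ofLine
    (f := fun t k => if k = i0 then σ * a
      else if k = j0 then τ * Real.sqrt (1-t) * b else if k = k2 then Real.sqrt t * β else 0)
  · apply Continuous.continuousOn
    apply continuous_pi
    intro k
    split_ifs <;> fun_prop
  · funext k; unfold vv
    split_ifs <;> subst_vars <;> simp_all [Real.sqrt_one, Real.sqrt_zero]
  · funext k
    split_ifs <;> subst_vars <;> simp_all [Real.sqrt_one, Real.sqrt_zero]
  · rintro z ⟨t, ht, rfl⟩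
    simp only [Set.mem_Icc] at ht
    beta_reduce
    constructor
    · intro hzero
      have := congrFun hzero i0
      rw [if_pos rfl] at this
      exact (mul_ne_zero hσ0 (ne_of_gt ha0)) (by simpa using this)
    · unfold Qd
      have key : ∀ k, lam k * (if k = i0 then σ * a
          else if k = j0 then τ * Real.sqrt (1-t) * b
          else if k = k2 then Real.sqrt t * β else 0) ^ 2
          = (if k = i0 then lam i0 * a^2 else if k = j0 then (1-t) * (lam j0 * b^2)
            else if k = k2 then t * (-(lam i0 * a^2)) else 0) := by
        intro k
        split_ifs with h1 h2 h3
        · subst h1; rw [mul_pow, hσ]; ring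
        · subst h2
          rw [mul_pow, mul_pow, hτ, Real.sq_sqrt (by linarith : (0:ℝ) ≤ 1 - t)]
          ring
        · subst h3
          rw [mul_pow, Real.sq_sqrt ht.1, hβ2]
          field_simp [hmu.ne]
        · ring
      rw [Finset.sum_congr rfl (fun k _ => key k), sumIf3 hij hik hjk]
      rw [ha2, hb2]; ring

end Bridges

section CoreAssembly
variable {lam : Fin n → ℝ}

private lemma Cs_neg {z : Fin n → ℝ} (hz : z ∈ Cs lam) : -z ∈ Cs lam :=
  ⟨neg_ne_zero.mpr hz.1, by rw [Qd_neg]; exact hz.2⟩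

private lemma JoinedIn.negCs {x y : Fin n → ℝ} (h : JoinedIn (Cs lam) x y) :
    JoinedIn (Cs lam) (-x) (-y) := by
  have h2 := h.map (f := fun z => -z) continuous_neg
  apply h2.mono
  rintro w ⟨u, hu, rfl⟩
  exact Cs_neg hu

private lemma vv_neg (i0 j0 : Fin n) (a b σ τ : ℝ) :
    -(vv i0 j0 a b σ τ) = vv i0 j0 a b (-σ) (-τ) := by
  funext k; simp only [Pi.neg_apply]; unfold vv; split_ifs <;> ring

private lemma core (hn : 3 ≤ n) (x y : Fin n → ℝ)
    (hx : x ∈ Cs lam) (hy : y ∈ Cs lam) :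
    ∃ ε : ℝ, ε ^ 2 = 1 ∧ JoinedIn (Cs lam) x (ε • y) := by
  by_cases hdep : ∃ κ : ℝ, y = κ • x
  · obtain ⟨κ, rfl⟩ := hdep
    have hκ0 : κ ≠ 0 := by
      intro h; rw [h, zero_smul] at hy; exact hy.1 rfl
    rcases hκ0.lt_or_gt with hκ | hκ
    · refine ⟨-1, by norm_num, ?_⟩
      have : (-1 : ℝ) • (κ • x) = (-κ) • x := by rw [smul_smul]; norm_num
      rw [this]
      exact joined_scale lam x hx (-κ) (by linarith)
    · refine ⟨1, by norm_num, ?_⟩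
      rw [one_smul]
      exact joined_scale lam x hx κ hκ
  · push_neg at hdep
    by_cases hmix : (∃ i, 0 < lam i) ∧ (∃ j, lam j < 0)
    · -- mixed signature case
      obtain ⟨⟨i0, hpos⟩, ⟨j0, hneg⟩⟩ := hmix
      have hij : i0 ≠ j0 := by intro h; rw [h] at hpos; linarith
      have hk2 : ∃ k2 : Fin n, i0 ≠ k2 ∧ j0 ≠ k2 := by
        by_contra h
        push_neg at h
        have hsub : (Finset.univ : Finset (Fin n)) ⊆ {i0, j0} := by
          intro k _
          rcases eq_or_ne i0 k with h1 | h1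
          · simp [← h1]
          · have := h k h1
            simp [← this]
        have hcard := Finset.card_le_card hsub
        simp only [Finset.card_univ, Fintype.card_fin] at hcard
        have : ({i0, j0} : Finset (Fin n)).card ≤ 2 :=
          (Finset.card_insert_le _ _).trans (by simp)
        omega
      obtain ⟨k2, hik, hjk⟩ := hk2
      have c1x := joined_to_canonical hij hpos hneg x hx
      have c1y := joined_to_canonical hij hpos hneg y hy
      rcases lt_trichotomy (lam k2) 0 with hmu | hmu | hmu
      · -- lam k2 < 0 : can flip τ
        have flip : ∀ σ τ τ' : ℝ, σ^2 = 1 → τ^2 = 1 → τ'^2 = 1 →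
            JoinedIn (Cs lam) (vv i0 j0 (Real.sqrt (-lam j0)) (Real.sqrt (lam i0)) σ τ)
              (vv i0 j0 (Real.sqrt (-lam j0)) (Real.sqrt (lam i0)) σ τ') := by
          intro σ τ τ' hσ hτ hτ'
          exact (bridge_neg hij hik hjk hpos hneg hmu σ τ hσ hτ).trans
            (bridge_neg hij hik hjk hpos hneg hmu σ τ' hσ hτ').symm
        by_cases hσσ : sgn (x i0) = sgn (y i0)
        · refine ⟨1, by norm_num, ?_⟩
          rw [one_smul]
          refine (c1x.trans ?_).trans c1y.symm
          rw [hσσ]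
          exact flip _ _ _ (sgn_sq _) (sgn_sq _) (sgn_sq _)
        · refine ⟨-1, by norm_num, ?_⟩
          have hσσ' : sgn (x i0) = -sgn (y i0) := by
            rcases sgn_cases (x i0) with h1 | h1 <;> rcases sgn_cases (y i0) with h2 | h2 <;>
              simp_all
          have c1y' := c1y.negCs
          rw [vv_neg] at c1y'
          have : (-1 : ℝ) • y = -y := by rw [neg_one_smul]
          rw [this]
          refine (c1x.trans ?_).trans c1y'.symm
          rw [hσσ']
          exact flip _ _ _ (by rw [neg_pow]; simp [sgn_sq]) (sgn_sq _) (by rw [neg_pow]; simp [sgn_sq])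
      · -- lam k2 = 0 : everything joined through e_{k2}
        refine ⟨1, by norm_num, ?_⟩
        rw [one_smul]
        have hbx := bridge_zero hij hik hjk hpos hneg hmu (sgn (x i0)) (sgn (x j0))
          (sgn_sq _) (sgn_sq _)
        have hby := bridge_zero hij hik hjk hpos hneg hmu (sgn (y i0)) (sgn (y j0))
          (sgn_sq _) (sgn_sq _)
        exact ((c1x.trans hbx).trans hby.symm).trans c1y.symm
      · -- lam k2 > 0 : can flip σ
        have flip : ∀ σ σ' τ : ℝ, σ^2 = 1 → σ'^2 = 1 → τ^2 = 1 →
            JoinedIn (Cs lam) (vv i0 j0 (Real.sqrt (-lam j0)) (Real.sqrt (lam i0)) σ τ)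
              (vv i0 j0 (Real.sqrt (-lam j0)) (Real.sqrt (lam i0)) σ' τ) := by
          intro σ σ' τ hσ hσ' hτ
          exact (bridge_pos hij hik hjk hpos hneg hmu σ τ hσ hτ).trans
            (bridge_pos hij hik hjk hpos hneg hmu σ' τ hσ' hτ).symm
        by_cases hττ : sgn (x j0) = sgn (y j0)
        · refine ⟨1, by norm_num, ?_⟩
          rw [one_smul]
          refine (c1x.trans ?_).trans c1y.symm
          rw [hττ]
          exact flip _ _ _ (sgn_sq _) (sgn_sq _) (sgn_sq _)
        · refine ⟨-1, by norm_num, ?_⟩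
          have hττ' : sgn (x j0) = -sgn (y j0) := by
            rcases sgn_cases (x j0) with h1 | h1 <;> rcases sgn_cases (y j0) with h2 | h2 <;>
              simp_all
          have c1y' := c1y.negCs
          rw [vv_neg] at c1y'
          have : (-1 : ℝ) • y = -y := by rw [neg_one_smul]
          rw [this]
          refine (c1x.trans ?_).trans c1y'.symm
          rw [hττ']
          exact flip _ _ _ (sgn_sq _) (by rw [neg_pow]; simp [sgn_sq]) (by rw [neg_pow]; simp [sgn_sq])
    · -- one-signed case: segment path
      have hone : (∀ i, 0 ≤ lam i * x i ^ 2 ∧ 0 ≤ lam i * y i ^ 2) ∨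
          (∀ i, lam i * x i ^ 2 ≤ 0 ∧ lam i * y i ^ 2 ≤ 0) := by
        rw [not_and_or] at hmix
        rcases hmix with h | h
        · push_neg at h
          right
          intro i
          exact ⟨mul_nonpos_of_nonpos_of_nonneg (h i) (sq_nonneg _),
            mul_nonpos_of_nonpos_of_nonneg (h i) (sq_nonneg _)⟩
        · push_neg at h
          left
          intro i
          exact ⟨mul_nonneg (h i) (sq_nonneg _), mul_nonneg (h i) (sq_nonneg _)⟩
      have hpt : ∀ i, lam i * x i ^ 2 = 0 ∧ lam i * y i ^ 2 = 0 := by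
        rcases hone with h | h
        · intro i
          constructor
          · exact (Finset.sum_eq_zero_iff_of_nonneg (fun j _ => (h j).1)).mp hx.2 i
              (Finset.mem_univ i)
          · exact (Finset.sum_eq_zero_iff_of_nonneg (fun j _ => (h j).2)).mp hy.2 i
              (Finset.mem_univ i)
        · intro i
          constructor
          · exact (Finset.sum_eq_zero_iff_of_nonpos (fun j _ => (h j).1)).mp hx.2 i
              (Finset.mem_univ i)
          · exact (Finset.sum_eq_zero_iff_of_nonpos (fun j _ => (h j).2)).mp hy.2 i
              (Finset.mem_univ i)
      refine ⟨1, by norm_num, ?_⟩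
      rw [one_smul]
      apply JoinedIn.ofLine (f := fun t => (1 - t) • x + t • y)
      · fun_prop
      · norm_num
      · norm_num
      · rintro z ⟨t, ht, rfl⟩
        beta_reduce
        constructor
        · intro hzero
          rcases eq_or_ne t 0 with h0 | h0
          · rw [h0] at hzero
            norm_num at hzero
            exact hx.1 hzero
          · apply hdep (t⁻¹ * -(1 - t))
            have : t • y = -((1 - t) • x) := by
              rw [← sub_eq_zero]
              funext k
              have := congrFun hzero k
              simp only [Pi.add_apply, Pi.smul_apply, Pi.zero_apply, smul_eq_mul] at this ⊢
              simp only [Pi.sub_apply, Pi.neg_apply, Pi.smul_apply, smul_eq_mul]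
              linarith
            funext k
            have := congrFun this k
            simp only [Pi.smul_apply, smul_eq_mul, Pi.neg_apply] at this ⊢
            field_simp at this ⊢
            linarith
        · unfold Qd
          apply Finset.sum_eq_zero
          intro i _
          obtain ⟨hxi, hyi⟩ := hpt i
          simp only [Pi.add_apply, Pi.smul_apply, smul_eq_mul]
          rcases eq_or_ne (lam i) 0 with hl | hl
          · rw [hl]; ring
          · have hx0 : x i = 0 := by
              have := mul_eq_zero.mp hxi
              rcases this with h | h
              · exact absurd h hl
              · exact pow_eq_zero_iff (by norm_num) |>.mp h
            have hy0 : y i = 0 := by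
              have := mul_eq_zero.mp hyi
              rcases this with h | h
              · exact absurd h hl
              · exact pow_eq_zero_iff (by norm_num) |>.mp h
            rw [hx0, hy0]
            ring

end CoreAssembly


private lemma cross_eq_zero_of_dot {s v : Fin 3 → ℝ} (hs : s ≠ 0) (hd : s ⬝ᵥ v = 0)
    (hc : crossProduct s v = 0) : v = 0 := by
  obtain ⟨i0, hi0⟩ := Function.ne_iff.mp hs
  have hss : 0 < s ⬝ᵥ s := by
    exact Finset.sum_pos' (fun j _ => mul_self_nonneg _)
      ⟨i0, Finset.mem_univ i0, mul_self_pos.mpr hi0⟩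
  have h0 := congrFun hc 0
  have h1 := congrFun hc 1
  have h2 := congrFun hc 2
  simp [crossProduct] at h0 h1 h2
  have hdd : s 0 * v 0 + s 1 * v 1 + s 2 * v 2 = 0 := by
    simpa [dotProduct, Fin.sum_univ_three] using hd
  have hss' : 0 < s 0 * s 0 + s 1 * s 1 + s 2 * s 2 := by
    simpa [dotProduct, Fin.sum_univ_three] using hss
  have key : ∀ i, (s 0 * s 0 + s 1 * s 1 + s 2 * s 2) * v i = 0 := by
    intro i
    fin_cases i <;> simp only [Fin.zero_eta, Fin.mk_one, Fin.reduceFinMk]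
    · linear_combination s 0 * hdd - s 1 * h2 + s 2 * h1
    · linear_combination s 1 * hdd + s 0 * h2 - s 2 * h0
    · linear_combination s 2 * hdd - s 0 * h1 + s 1 * h0
  funext i
  have := key i
  have := mul_eq_zero.mp this
  rcases this with h | h
  · exact absurd h (ne_of_gt hss')
  · exact h


private lemma dot_self_pos {m : ℕ} (v : Fin m → ℝ) (hv : v ≠ 0) : 0 < v ⬝ᵥ v := by
  obtain ⟨i, hi⟩ := Function.ne_iff.mp hv
  exact Finset.sum_pos' (fun j _ => mul_self_nonneg _) ⟨i, Finset.mem_univ i, mul_self_pos.mpr hi⟩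

private lemma cross_basis {s l d : Fin 3 → ℝ} (hw : crossProduct s l ≠ 0)
    (h1 : s ⬝ᵥ d = 0) (h2 : l ⬝ᵥ d = 0) (h3 : (crossProduct s l) ⬝ᵥ d = 0) : d = 0 := by
  set w := crossProduct s l with hwdef
  set M : Matrix (Fin 3) (Fin 3) ℝ := Matrix.of ![s, l, w] with hM
  have hdet : M.det = w ⬝ᵥ w := by
    rw [Matrix.det_fin_three]
    simp only [hM, hwdef, Matrix.of_apply, Matrix.cons_val', Matrix.cons_val_zero,
      Matrix.cons_val_one, Matrix.head_cons, Matrix.empty_val', Matrix.cons_val_fin_one,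
      Matrix.head_fin_const, crossProduct, dotProduct, Fin.sum_univ_three]
    simp [Matrix.cons_val_zero, Matrix.cons_val_one]
    ring
  have hdet0 : M.det ≠ 0 := by rw [hdet]; exact (dot_self_pos w hw).ne'
  have hMd : M *ᵥ d = 0 := by
    funext i
    fin_cases i <;> simp [hM, Matrix.mulVec, Pi.zero_apply] <;>
      [(have := h1); (have := h2); (have := h3)] <;>
      simpa [dotProduct, Fin.sum_univ_three] using this
  have : d = (M⁻¹ * M) *ᵥ d := by
    rw [Matrix.nonsing_inv_mul M (isUnit_iff_ne_zero.mpr hdet0), Matrix.one_mulVec]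
  rw [this, ← Matrix.mulVec_mulVec, hMd, Matrix.mulVec_zero]

private lemma cross_cross_self (s v : Fin 3 → ℝ) :
    crossProduct s (crossProduct s v) = (s ⬝ᵥ v) • s - (s ⬝ᵥ s) • v := by
  funext i
  fin_cases i <;>
    simp [crossProduct, dotProduct, Fin.sum_univ_three, Pi.smul_apply, smul_eq_mul] <;> ring



private lemma spectral {n : ℕ} (R : Matrix (Fin n) (Fin n) ℝ) (hR : R.IsSymm) :
    ∃ (U V : Matrix (Fin n) (Fin n) ℝ) (lam : Fin n → ℝ),
      U * V = 1 ∧ V * U = 1 ∧ ∀ w, qf R (U *ᵥ w) = Qd lam w := by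
  have hH : R.IsHermitian := by
    rw [Matrix.IsHermitian]
    rw [show R.conjTranspose = R.transpose by ext i j; simp [Matrix.conjTranspose_apply]]
    exact hR
  obtain ⟨U, hU, D, hD⟩ : ∃ (U : Matrix (Fin n) (Fin n) ℝ), U ∈ Matrix.unitaryGroup (Fin n) ℝ ∧
      ∃ D, R = U * Matrix.diagonal D * star U := by
    refine ⟨hH.eigenvectorUnitary, hH.eigenvectorUnitary.2, hH.eigenvalues, ?_⟩
    have := hH.spectral_theorem
    rw [Unitary.conjStarAlgAut_apply] at this
    exact this.trans rfl
  have hsU : star U * U = 1 := (Matrix.mem_unitaryGroup_iff').mp hU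
  have hUs : U * star U = 1 := (Matrix.mem_unitaryGroup_iff).mp hU
  refine ⟨U, star U, D, hUs, hsU, ?_⟩
  intro w
  have hUt : Uᵀ = star U := by ext i j; simp [Matrix.conjTranspose_apply]
  rw [qf, hD]
  rw [Matrix.mulVec_mulVec w (U * Matrix.diagonal D * star U) U]
  rw [mul_assoc (U * Matrix.diagonal D) (star U) U, hsU, mul_one]
  rw [Matrix.dotProduct_mulVec, Matrix.vecMul_mulVec]
  rw [← mul_assoc, hUt, hsU, one_mul]
  rw [Qd]
  simp only [Matrix.vecMul_diagonal, dotProduct]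
  exact Finset.sum_congr rfl fun i _ => by ring
section Addition
variable {n : ℕ}

private lemma qf_sub_matrix (A B : Matrix (Fin n) (Fin n) ℝ) (x : Fin n → ℝ) :
    qf (A - B) x = qf A x - qf B x := by
  simp [qf, Matrix.sub_mulVec]

private lemma qf_smul_matrix (c : ℝ) (A : Matrix (Fin n) (Fin n) ℝ) (x : Fin n → ℝ) :
    qf (c • A) x = c * qf A x := by
  simp [qf, Matrix.smul_mulVec]

private lemma Lm_isSymm (A₁ A₂ A₃ : Matrix (Fin n) (Fin n) ℝ)
    (h₁ : A₁.IsSymm) (h₂ : A₂.IsSymm) (h₃ : A₃.IsSymm) (l : Fin 3 → ℝ) :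
    (Lm A₁ A₂ A₃ l).IsSymm := by
  unfold Lm Matrix.IsSymm
  rw [Matrix.transpose_add, Matrix.transpose_add, Matrix.transpose_smul, Matrix.transpose_smul,
    Matrix.transpose_smul, h₁, h₂, h₃]

private lemma comb_mem_uIcc {θ a b : ℝ} (h0 : 0 ≤ θ) (h1 : θ ≤ 1) :
    θ * a + (1 - θ) * b ∈ Set.uIcc a b := by
  rcases le_total a b with h | h
  · rw [Set.uIcc_of_le h, Set.mem_Icc]
    constructor <;> nlinarith
  · rw [Set.uIcc_of_ge h, Set.mem_Icc]
    constructor <;> nlinarith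

private lemma add_mem (hn : 3 ≤ n) (A₁ A₂ A₃ : Matrix (Fin n) (Fin n) ℝ)
    (h₁ : A₁.IsSymm) (h₂ : A₂.IsSymm) (h₃ : A₃.IsSymm)
    (s : Fin 3 → ℝ) (hP : (Lm A₁ A₂ A₃ s).PosDef) (x y : Fin n → ℝ) :
    ∃ z, Qv A₁ A₂ A₃ z = Qv A₁ A₂ A₃ x + Qv A₁ A₂ A₃ y := by
  classical
  set Q : (Fin n → ℝ) → (Fin 3 → ℝ) := Qv A₁ A₂ A₃ with hQdef
  have hQ0 : Q 0 = 0 := by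
    funext i
    fin_cases i <;> simp [hQdef, Qv, qf]
  by_cases hx0 : x = 0
  · exact ⟨y, by rw [hx0, hQ0, zero_add]⟩
  by_cases hy0 : y = 0
  · exact ⟨x, by rw [hy0, hQ0, add_zero]⟩
  -- the positive definite form
  set p : (Fin n → ℝ) → ℝ := qf (Lm A₁ A₂ A₃ s) with hpdef
  have hpd : ∀ z, z ≠ 0 → 0 < p z := by
    intro z hz
    have := hP.dotProduct_mulVec_pos hz
    simpa [hpdef, qf] using this
  have hsQ : ∀ z, s ⬝ᵥ Q z = p z := fun z => dot_Qv A₁ A₂ A₃ s z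
  set px := p x with hpx
  set py := p y with hpy
  have hpx0 : 0 < px := hpd x hx0
  have hpy0 : 0 < py := hpd y hy0
  set ρ := px + py with hρ
  have hρ0 : 0 < ρ := by positivity
  set cx := Real.sqrt (ρ / px) with hcx
  set cy := Real.sqrt (ρ / py) with hcy
  have hcx2 : cx ^ 2 = ρ / px := Real.sq_sqrt (by positivity)
  have hcy2 : cy ^ 2 = ρ / py := Real.sq_sqrt (by positivity)
  have hcx0 : cx ≠ 0 := by positivity
  have hcy0 : cy ≠ 0 := by positivity
  set x' := cx • x with hx'
  set y' := cy • y with hy'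
  have hx'0 : x' ≠ 0 := smul_ne_zero hcx0 hx0
  have hy'0 : y' ≠ 0 := smul_ne_zero hcy0 hy0
  have hQx' : Q x' = (ρ / px) • Q x := by rw [hx', hQdef, Qv_smul, hcx2]
  have hQy' : Q y' = (ρ / py) • Q y := by rw [hy', hQdef, Qv_smul, hcy2]
  have hpx' : p x' = ρ := by
    rw [hx', hpdef, qf_smul', hcx2]
    field_simp
    rfl
  have hpy' : p y' = ρ := by
    rw [hy', hpdef, qf_smul', hcy2]
    field_simp
    rfl
  have hTx : (px / ρ) • Q x' = Q x := by
    rw [hQx', smul_smul]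
    rw [show px / ρ * (ρ / px) = 1 by field_simp]
    rw [one_smul]
  have hTy : (py / ρ) • Q y' = Q y := by
    rw [hQy', smul_smul]
    rw [show py / ρ * (ρ / py) = 1 by field_simp]
    rw [one_smul]
  by_cases heq : Q x' = Q y'
  · refine ⟨x', ?_⟩
    have : Q x + Q y = (px / ρ) • Q x' + (py / ρ) • Q y' := by rw [hTx, hTy]
    rw [this, ← heq, ← add_smul]
    rw [show px / ρ + py / ρ = 1 by field_simp; rfl]
    rw [one_smul]
  · -- main case
    set v := Q x' - Q y' with hv
    have hv0 : v ≠ 0 := sub_ne_zero.mpr heq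
    have hs0 : s ≠ 0 := by
      intro h
      have hz : p x = 0 := by
        rw [← hsQ x, h, zero_dotProduct]
      rw [← hpx] at hz
      linarith
    have hsv : s ⬝ᵥ v = 0 := by
      rw [hv, dotProduct_sub, hsQ, hsQ, hpx', hpy', sub_self]
    set l := crossProduct s v with hl
    have hl0 : l ≠ 0 := by
      intro h
      exact hv0 (cross_eq_zero_of_dot hs0 hsv (hl ▸ h))
    set w := crossProduct s l with hw
    have hwv : w = -(s ⬝ᵥ s) • v := by
      rw [hw, hl, cross_cross_self, hsv]
      funext i
      simp [dotProduct, Fin.sum_univ_three]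
      ring
    have hw0 : w ≠ 0 := by
      rw [hwv]
      apply smul_ne_zero _ hv0
      have := dot_self_pos s hs0
      intro h
      rw [neg_eq_zero] at h
      linarith
    have hlv : l ⬝ᵥ v = 0 := by
      rw [hl]
      simp [crossProduct, dotProduct, Fin.sum_univ_three]
      ring
    set c := l ⬝ᵥ Q x' with hc
    have hly' : l ⬝ᵥ Q y' = c := by
      have : l ⬝ᵥ (Q x' - Q y') = 0 := hlv
      rw [dotProduct_sub, sub_eq_zero] at this
      rw [← this]
    set R : Matrix (Fin n) (Fin n) ℝ := Lm A₁ A₂ A₃ l - (c / ρ) • Lm A₁ A₂ A₃ s with hR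
    have hRsymm : R.IsSymm := by
      rw [hR]
      unfold Matrix.IsSymm
      rw [Matrix.transpose_sub, Matrix.transpose_smul,
        Lm_isSymm A₁ A₂ A₃ h₁ h₂ h₃ l, Lm_isSymm A₁ A₂ A₃ h₁ h₂ h₃ s]
    have hqR : ∀ z, qf R z = l ⬝ᵥ Q z - (c / ρ) * p z := by
      intro z
      rw [hR, qf_sub_matrix, qf_smul_matrix, ← dot_Qv, hpdef]
    have hqRx' : qf R x' = 0 := by
      rw [hqR, hpx', ← hc]
      field_simp
      ring
    have hqRy' : qf R y' = 0 := by
      rw [hqR, hpy', hly']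
      field_simp
      ring
    -- diagonalize R
    obtain ⟨U, V, lam, hUV, hVU, hq⟩ := spectral R hRsymm
    have hUinj : ∀ u : Fin n → ℝ, U *ᵥ u = 0 → u = 0 := by
      intro u hu
      have : V *ᵥ (U *ᵥ u) = u := by
        rw [Matrix.mulVec_mulVec, hVU, Matrix.one_mulVec]
      rw [hu, Matrix.mulVec_zero] at this
      exact this.symm
    set ωx := V *ᵥ x' with hωx
    set ωy := V *ᵥ y' with hωy
    have hUωx : U *ᵥ ωx = x' := by
      rw [hωx, Matrix.mulVec_mulVec, hUV, Matrix.one_mulVec]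
    have hUωy : U *ᵥ ωy = y' := by
      rw [hωy, Matrix.mulVec_mulVec, hUV, Matrix.one_mulVec]
    have hωxC : ωx ∈ Cs lam := by
      constructor
      · intro h
        rw [h, Matrix.mulVec_zero] at hUωx
        exact hx'0 hUωx.symm
      · show Qd lam ωx = 0
        rw [← hq, hUωx]
        exact hqRx'
    have hωyC : ωy ∈ Cs lam := by
      constructor
      · intro h
        rw [h, Matrix.mulVec_zero] at hUωy
        exact hy'0 hUωy.symm
      · show Qd lam ωy = 0
        rw [← hq, hUωy]
        exact hqRy'
    obtain ⟨ε, hε2, hJ⟩ := core hn ωx ωy hωxC hωyC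
    have hUcont : Continuous (fun u : Fin n → ℝ => U *ᵥ u) := by
      unfold Matrix.mulVec dotProduct
      apply continuous_pi
      intro i
      exact continuous_finset_sum _ fun j _ => (continuous_const.mul (continuous_apply j))
    have hJ2 := hJ.map hUcont
    rw [hUωx] at hJ2
    have hUε : U *ᵥ (ε • ωy) = ε • y' := by
      rw [Matrix.mulVec_smul, hUωy]
    rw [hUε] at hJ2
    set Cr : Set (Fin n → ℝ) := {z | z ≠ 0 ∧ qf R z = 0} with hCr
    have hJ3 : JoinedIn Cr x' (ε • y') := by
      apply hJ2.mono
      rintro z ⟨u, hu, rfl⟩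
      constructor
      · intro h
        exact hu.1 (hUinj u h)
      · rw [hq]
        exact hu.2
    obtain ⟨γ, hγ⟩ := hJ3
    -- intermediate value argument
    set Nz : (Fin n → ℝ) → (Fin n → ℝ) := fun z => Real.sqrt (ρ / p z) • z with hNz
    set F : ℝ → ℝ := fun u => w ⬝ᵥ Q (Nz (γ.extend u)) with hF
    have hmaps : ∀ u ∈ Set.Icc (0:ℝ) 1, γ.extend u ∈ Cr := by
      intro u hu
      rw [Path.extend_apply γ hu]
      exact hγ _
    have hFcont : ContinuousOn F (Set.Icc (0:ℝ) 1) := by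
      have hGcont : ContinuousOn (fun z => w ⬝ᵥ Q (Nz z)) {z : Fin n → ℝ | z ≠ 0} := by
        have : (fun z => w ⬝ᵥ Q (Nz z)) = fun z => qf (Lm A₁ A₂ A₃ w) (Nz z) := by
          funext z
          rw [hQdef, dot_Qv]
        rw [this]
        apply (continuous_qf (Lm A₁ A₂ A₃ w)).comp_continuousOn
        rw [hNz]
        apply ContinuousOn.fun_smul
        · apply Continuous.comp_continuousOn Real.continuous_sqrt
          apply ContinuousOn.div continuousOn_const
            ((continuous_qf (Lm A₁ A₂ A₃ s)).continuousOn)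
          intro z hz
          exact (hpd z hz).ne'
        · exact continuousOn_id
      apply hGcont.comp γ.continuous_extend.continuousOn
      intro u hu
      exact (hmaps u hu).1
    have hF0 : F 0 = w ⬝ᵥ Q x' := by
      rw [hF]
      simp only [Path.extend_zero]
      have : Nz x' = x' := by
        rw [hNz]
        simp only [hpx']
        rw [div_self hρ0.ne', Real.sqrt_one, one_smul]
      rw [this]
    have hF1 : F 1 = w ⬝ᵥ Q y' := by
      rw [hF]
      simp only [Path.extend_one]
      have hpεy : p (ε • y') = ρ := by
        rw [hpdef, qf_smul', hε2, one_mul, ← hpdef, hpy']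
      have : Nz (ε • y') = ε • y' := by
        rw [hNz]
        simp only [hpεy]
        rw [div_self hρ0.ne', Real.sqrt_one, one_smul]
      rw [this, hQdef, Qv_smul, hε2, one_smul]
    -- target value
    have hθ0 : 0 ≤ px / ρ := by positivity
    have hθ1 : px / ρ ≤ 1 := by
      rw [div_le_one hρ0]
      linarith
    have hTsum : Q x + Q y = (px / ρ) • Q x' + (py / ρ) • Q y' := by rw [hTx, hTy]
    have htarget : w ⬝ᵥ (Q x + Q y) = (px / ρ) * (w ⬝ᵥ Q x') + (1 - px / ρ) * (w ⬝ᵥ Q y') := by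
      rw [hTsum, dotProduct_add]
      have h1 : w ⬝ᵥ ((px / ρ) • Q x') = (px / ρ) * (w ⬝ᵥ Q x') := by
        rw [dotProduct_smul, smul_eq_mul]
      have h2 : w ⬝ᵥ ((py / ρ) • Q y') = (1 - px / ρ) * (w ⬝ᵥ Q y') := by
        rw [dotProduct_smul, smul_eq_mul]
        congr 1
        field_simp
        ring
      rw [h1, h2]
    have hmem : w ⬝ᵥ (Q x + Q y) ∈ Set.uIcc (F 0) (F 1) := by
      rw [hF0, hF1, htarget]
      exact comb_mem_uIcc hθ0 hθ1
    have hIVT := intermediate_value_uIcc (a := (0:ℝ)) (b := 1) (f := F)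
      (by rwa [Set.uIcc_of_le (zero_le_one)])
    rw [Set.uIcc_of_le (zero_le_one : (0:ℝ) ≤ 1)] at hIVT
    obtain ⟨u, hu, hFu⟩ := hIVT hmem
    -- the witness
    set zc := γ.extend u with hzc
    have hzcC : zc ∈ Cr := hmaps u hu
    set z := Nz zc with hz
    refine ⟨z, ?_⟩
    have hpzc : 0 < p zc := hpd zc hzcC.1
    have hcz2 : (Real.sqrt (ρ / p zc)) ^ 2 = ρ / p zc := Real.sq_sqrt (by positivity)
    have hpz : p z = ρ := by
      rw [hz, hNz, hpdef, qf_smul', ← hpdef, hcz2]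
      field_simp
    have hqRz : qf R z = 0 := by
      rw [hz, hNz, qf_smul', hzcC.2, mul_zero]
    have hsz : s ⬝ᵥ Q z = ρ := by rw [hsQ, hpz]
    have hlz : l ⬝ᵥ Q z = c := by
      have := hqR z
      rw [hqRz, hpz] at this
      have : l ⬝ᵥ Q z = (c / ρ) * ρ := by linarith
      rw [this]
      field_simp
    have hwz : w ⬝ᵥ Q z = w ⬝ᵥ (Q x + Q y) := by
      rw [← hFu, hF]
    -- T side values
    have hsT : s ⬝ᵥ (Q x + Q y) = ρ := by
      rw [dotProduct_add, hsQ, hsQ, ← hpx, ← hpy]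
    have hlT : l ⬝ᵥ (Q x + Q y) = c := by
      rw [hTsum, dotProduct_add, dotProduct_smul, dotProduct_smul, ← hc, hly']
      rw [smul_eq_mul, smul_eq_mul]
      field_simp
      ring
    -- conclude
    have hd : Q z - (Q x + Q y) = 0 := by
      apply cross_basis hw0
      · rw [dotProduct_sub, hsz, hsT, sub_self]
      · rw [dotProduct_sub, hlz, hlT, sub_self]
      · rw [dotProduct_sub, hwz, sub_self]
    rw [sub_eq_zero] at hd
    exact hd

end Addition

theorem polyak_convexity (n : ℕ) (hn : 3 ≤ n)
    (A₁ A₂ A₃ : Matrix (Fin n) (Fin n) ℝ)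
    (h₁ : A₁.IsSymm) (h₂ : A₂.IsSymm) (h₃ : A₃.IsSymm)
    (hs : ∃ s : Fin 3 → ℝ, (s 0 • A₁ + s 1 • A₂ + s 2 • A₃).PosDef) :
    Convex ℝ {y : Fin 3 → ℝ | ∃ x : Fin n → ℝ,
        y = ![x ⬝ᵥ A₁ *ᵥ x, x ⬝ᵥ A₂ *ᵥ x, x ⬝ᵥ A₃ *ᵥ x]} ∧
    ∀ y ∈ {y : Fin 3 → ℝ | ∃ x : Fin n → ℝ,
        y = ![x ⬝ᵥ A₁ *ᵥ x, x ⬝ᵥ A₂ *ᵥ x, x ⬝ᵥ A₃ *ᵥ x]},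
      ∀ c : ℝ, 0 ≤ c → c • y ∈ {y : Fin 3 → ℝ | ∃ x : Fin n → ℝ,
        y = ![x ⬝ᵥ A₁ *ᵥ x, x ⬝ᵥ A₂ *ᵥ x, x ⬝ᵥ A₃ *ᵥ x]} := by
  obtain ⟨s, hP⟩ := hs
  have hP' : (Lm A₁ A₂ A₃ s).PosDef := hP
  have hset : ∀ x : Fin n → ℝ,
      ![x ⬝ᵥ A₁ *ᵥ x, x ⬝ᵥ A₂ *ᵥ x, x ⬝ᵥ A₃ *ᵥ x] = Qv A₁ A₂ A₃ x := fun x => rfl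
  constructor
  · -- convexity
    rintro y₁ ⟨x₁, rfl⟩ y₂ ⟨x₂, rfl⟩ a b ha hb hab
    rw [hset, hset]
    have e1 : a • Qv A₁ A₂ A₃ x₁ = Qv A₁ A₂ A₃ (Real.sqrt a • x₁) := by
      rw [Qv_smul, Real.sq_sqrt ha]
    have e2 : b • Qv A₁ A₂ A₃ x₂ = Qv A₁ A₂ A₃ (Real.sqrt b • x₂) := by
      rw [Qv_smul, Real.sq_sqrt hb]
    obtain ⟨z, hz⟩ := add_mem hn A₁ A₂ A₃ h₁ h₂ h₃ s hP'
      (Real.sqrt a • x₁) (Real.sqrt b • x₂)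
    refine ⟨z, ?_⟩
    rw [hset z, hz, ← e1, ← e2]
  · -- cone property
    rintro y ⟨x, rfl⟩ c hc
    refine ⟨Real.sqrt c • x, ?_⟩
    rw [hset, hset, Qv_smul, Real.sq_sqrt hc]
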